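/- Let R ∈ Mₙ⊗Mₙ be a solution of the quantum Yang–Baxter equation of real type, i.e. conj(R^i_j{}^k_l) = R^l_k{}^j_i. Then the assignment (u^i_j)^{*̲} = u^j_i extends to an antilinear antimultiplicative involution on the braided matrix algebra B(R) with relations R₂₁ u₁ R₁₂ u₂ = u₂ R₂₁ u₁ R₁₂, and the braided coproduct Δ̲u^i_j = u^i_k ⊗ u^k_j satisfies Δ̲ ∘ *̲ = τ ∘ (*̲⊗*̲) ∘ Δ̲. -/

import Mathlib

open scoped TensorProduct

/-- The braided-matrix relations `R₂₁ u₁ R₁₂ u₂ = u₂ R₂₁ u₁ R₁₂` (entrywise, with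
summation convention) as a relation on the free algebra on the `n²` generators
`u^i_j`. -/
def braidedMatrixRel {n : ℕ} (R : Fin n → Fin n → Fin n → Fin n → ℂ) :
    FreeAlgebra ℂ (Fin n × Fin n) → FreeAlgebra ℂ (Fin n × Fin n) → Prop :=
  fun x y => ∃ i j k l : Fin n,
    (x = ∑ a : Fin n, ∑ b : Fin n, ∑ c : Fin n, ∑ d : Fin n,
        (R k a i b * R c j a d) • (FreeAlgebra.ι ℂ (b, c) * FreeAlgebra.ι ℂ (d, l))) ∧
    (y = ∑ a : Fin n, ∑ b : Fin n, ∑ c : Fin n, ∑ d : Fin n,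
        (R a b i c * R d j b l) • (FreeAlgebra.ι ℂ (k, a) * FreeAlgebra.ι ℂ (c, d)))

/-- The braided matrix algebra `B(R)`. -/
def BraidedMatrices {n : ℕ} (R : Fin n → Fin n → Fin n → Fin n → ℂ) : Type :=
  RingQuot (braidedMatrixRel R)

noncomputable instance {n : ℕ} (R : Fin n → Fin n → Fin n → Fin n → ℂ) :
    Ring (BraidedMatrices R) := by unfold BraidedMatrices; infer_instance

noncomputable instance {n : ℕ} (R : Fin n → Fin n → Fin n → Fin n → ℂ) :
    Algebra ℂ (BraidedMatrices R) := by unfold BraidedMatrices; infer_instance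

/-- The matrix generators `u^i_j` of `B(R)`. -/
noncomputable def ugen {n : ℕ} (R : Fin n → Fin n → Fin n → Fin n → ℂ)
    (i j : Fin n) : BraidedMatrices R :=
  RingQuot.mkAlgHom ℂ (braidedMatrixRel R) (FreeAlgebra.ι ℂ (i, j))

namespace BMStar

variable {n : ℕ} (R : Fin n → Fin n → Fin n → Fin n → ℂ)

/-- Opposite algebra with conjugated scalar action. -/
def ConjB : Type := (BraidedMatrices R)ᵐᵒᵖ

noncomputable instance : Ring (ConjB R) := by unfold ConjB; infer_instance

def toOp : BraidedMatrices R → ConjB R := MulOpposite.op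
def ofOp : ConjB R → BraidedMatrices R := MulOpposite.unop

@[simp] lemma ofOp_toOp (x : BraidedMatrices R) : ofOp R (toOp R x) = x := rfl
@[simp] lemma toOp_ofOp (x : ConjB R) : toOp R (ofOp R x) = x := rfl

@[simp] lemma toOp_mul (x y : BraidedMatrices R) :
    toOp R x * toOp R y = toOp R (y * x) := rfl

@[simp] lemma toOp_add (x y : BraidedMatrices R) :
    toOp R x + toOp R y = toOp R (x + y) := rfl

lemma toOp_inj {x y : BraidedMatrices R} (h : toOp R x = toOp R y) : x = y :=
  MulOpposite.op_injective h

noncomputable instance : Algebra ℂ (ConjB R) :=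
  RingHom.toAlgebra'
    (((algebraMap ℂ (BraidedMatrices R)ᵐᵒᵖ).comp (starRingEnd ℂ) : ℂ →+* (BraidedMatrices R)ᵐᵒᵖ) :
      ℂ →+* ConjB R)
    (fun c x => Algebra.commutes (A := (BraidedMatrices R)ᵐᵒᵖ) ((starRingEnd ℂ) c) x)

lemma algebraMap_conjB (c : ℂ) :
    algebraMap ℂ (ConjB R) c = toOp R (algebraMap ℂ (BraidedMatrices R) ((starRingEnd ℂ) c)) :=
  rfl

@[simp] lemma smul_toOp (c : ℂ) (x : BraidedMatrices R) :
    c • toOp R x = toOp R ((starRingEnd ℂ) c • x) := by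
  rw [Algebra.smul_def, algebraMap_conjB, toOp_mul, ← Algebra.commutes, ← Algebra.smul_def]

@[simp] lemma sum_toOp {ι : Type*} (s : Finset ι) (f : ι → BraidedMatrices R) :
    (∑ i ∈ s, toOp R (f i)) = toOp R (∑ i ∈ s, f i) :=
  map_sum (MulOpposite.opAddEquiv : BraidedMatrices R ≃+ (BraidedMatrices R)ᵐᵒᵖ) f s |>.symm

noncomputable def phi : FreeAlgebra ℂ (Fin n × Fin n) →ₐ[ℂ] ConjB R :=
  FreeAlgebra.lift ℂ (fun p => toOp R (ugen R p.2 p.1))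

@[simp] lemma phi_ι (p : Fin n × Fin n) :
    phi R (FreeAlgebra.ι ℂ p) = toOp R (ugen R p.2 p.1) := by
  simp [phi]

@[simp] lemma ugen_def (i j : Fin n) :
    RingQuot.mkAlgHom ℂ (braidedMatrixRel R) (FreeAlgebra.ι ℂ (i, j)) = ugen R i j := rfl

/-- reindex (a,b,c,d) ↦ term f d a c b -/
lemma sum4_collapse {M : Type*} [AddCommMonoid M] (g : Fin n → Fin n → Fin n → Fin n → M) :
    (∑ a : Fin n, ∑ b : Fin n, ∑ c : Fin n, ∑ d : Fin n, g a b c d)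
      = ∑ p : Fin n × Fin n × Fin n × Fin n, g p.1 p.2.1 p.2.2.1 p.2.2.2 := by
  rw [Fintype.sum_prod_type]
  refine Finset.sum_congr rfl fun a _ => ?_
  rw [Fintype.sum_prod_type]
  refine Finset.sum_congr rfl fun b _ => ?_
  rw [Fintype.sum_prod_type]

lemma sum4_1 {M : Type*} [AddCommMonoid M] (f : Fin n → Fin n → Fin n → Fin n → M) :
    (∑ a : Fin n, ∑ b : Fin n, ∑ c : Fin n, ∑ d : Fin n, f d a c b)
      = ∑ a : Fin n, ∑ b : Fin n, ∑ c : Fin n, ∑ d : Fin n, f a b c d := by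
  rw [sum4_collapse, sum4_collapse]
  exact Fintype.sum_equiv
    ⟨fun p => (p.2.2.2, p.1, p.2.2.1, p.2.1), fun p => (p.2.1, p.2.2.2, p.2.2.1, p.1),
      fun p => rfl, fun p => rfl⟩ _ _ (fun p => rfl)

lemma sum4_2 {M : Type*} [AddCommMonoid M] (f : Fin n → Fin n → Fin n → Fin n → M) :
    (∑ a : Fin n, ∑ b : Fin n, ∑ c : Fin n, ∑ d : Fin n, f b d c a)
      = ∑ a : Fin n, ∑ b : Fin n, ∑ c : Fin n, ∑ d : Fin n, f a b c d := by
  rw [sum4_collapse, sum4_collapse]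
  exact Fintype.sum_equiv
    ⟨fun p => (p.2.1, p.2.2.2, p.2.2.1, p.1), fun p => (p.2.2.2, p.1, p.2.2.1, p.2.1),
      fun p => rfl, fun p => rfl⟩ _ _ (fun p => rfl)

lemma rel_preserved (hreal : ∀ i j k l, (starRingEnd ℂ) (R i j k l) = R l k j i) :
    ∀ ⦃x y : FreeAlgebra ℂ (Fin n × Fin n)⦄, braidedMatrixRel R x y →
      (phi R).toRingHom x = (phi R).toRingHom y := by
  rintro x y ⟨i, j, k, l, rfl, rfl⟩
  have key := RingQuot.mkAlgHom_rel (S := ℂ) (A := FreeAlgebra ℂ (Fin n × Fin n))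
    (s := braidedMatrixRel R) (⟨j, i, l, k, rfl, rfl⟩ : braidedMatrixRel R
      (∑ a : Fin n, ∑ b : Fin n, ∑ c : Fin n, ∑ d : Fin n,
        (R l a j b * R c i a d) • (FreeAlgebra.ι ℂ (b, c) * FreeAlgebra.ι ℂ (d, k)))
      (∑ a : Fin n, ∑ b : Fin n, ∑ c : Fin n, ∑ d : Fin n,
        (R a b j c * R d i b k) • (FreeAlgebra.ι ℂ (l, a) * FreeAlgebra.ι ℂ (c, d))))
  simp only [map_sum, map_smul, map_mul, ugen_def] at key
  show phi R _ = phi R _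
  simp only [map_sum, map_smul, map_mul, phi_ι, toOp_mul, smul_toOp, sum_toOp,
    map_mul (starRingEnd ℂ), hreal]
  refine congrArg (toOp R) ?_
  have h1 : (∑ a : Fin n, ∑ b : Fin n, ∑ c : Fin n, ∑ d : Fin n,
        (R b i a k * R d a j c) • (ugen R l d * ugen R c b))
      = ∑ a : Fin n, ∑ b : Fin n, ∑ c : Fin n, ∑ d : Fin n,
        (R a b j c * R d i b k) • (ugen R l a * ugen R c d) := by
    rw [← sum4_1 (fun a b c d => (R a b j c * R d i b k) • (ugen R l a * ugen R c d))]
    refine Finset.sum_congr rfl fun a _ => Finset.sum_congr rfl fun b _ =>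
      Finset.sum_congr rfl fun c _ => Finset.sum_congr rfl fun d _ => ?_
    rw [mul_comm (R b i a k) (R d a j c)]
  have h2 : (∑ a : Fin n, ∑ b : Fin n, ∑ c : Fin n, ∑ d : Fin n,
        (R c i b a * R l b j d) • (ugen R d c * ugen R a k))
      = ∑ a : Fin n, ∑ b : Fin n, ∑ c : Fin n, ∑ d : Fin n,
        (R l a j b * R c i a d) • (ugen R b c * ugen R d k) := by
    rw [← sum4_2 (fun a b c d => (R l a j b * R c i a d) • (ugen R b c * ugen R d k))]
    refine Finset.sum_congr rfl fun a _ => Finset.sum_congr rfl fun b _ =>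
      Finset.sum_congr rfl fun c _ => Finset.sum_congr rfl fun d _ => ?_
    rw [mul_comm (R c i b a) (R l b j d)]
  rw [h1, h2]
  exact key.symm

noncomputable def Fhom (hreal : ∀ i j k l, (starRingEnd ℂ) (R i j k l) = R l k j i) :
    BraidedMatrices R →+* ConjB R :=
  RingQuot.lift ⟨(phi R).toRingHom, rel_preserved R hreal⟩

lemma Fhom_mk (hreal : ∀ i j k l, (starRingEnd ℂ) (R i j k l) = R l k j i)
    (a : FreeAlgebra ℂ (Fin n × Fin n)) :
    Fhom R hreal (RingQuot.mkAlgHom ℂ (braidedMatrixRel R) a) = phi R a := by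
  have h : RingQuot.mkAlgHom ℂ (braidedMatrixRel R) a
      = RingQuot.mkRingHom (braidedMatrixRel R) a := by
    rw [← RingQuot.mkAlgHom_coe ℂ (braidedMatrixRel R)]; rfl
  rw [h]
  exact RingQuot.lift_mkRingHom_apply _ (rel_preserved R hreal) a

end BMStar

/-- If `R` is a solution of the QYBE of real type
(`conj R^i_j{}^k_l = R^l_k{}^j_i`), then `(u^i_j)^{*̲} = u^j_i` extends to an antilinear
antimultiplicative involution `*̲` on the braided matrix algebra `B(R)`, and the braided
coproduct `Δ̲ u^i_j = Σ_k u^i_k ⊗ u^k_j` satisfies `Δ̲ ∘ *̲ = τ ∘ (*̲ ⊗ *̲) ∘ Δ̲` (on the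
matrix generators). -/
theorem braided_matrix_star_structure
    {n : ℕ} (R : Fin n → Fin n → Fin n → Fin n → ℂ)
    (hreal : ∀ i j k l, (starRingEnd ℂ) (R i j k l) = R l k j i) :
    ∃ st : BraidedMatrices R →+ BraidedMatrices R,
      -- antilinear
      (∀ (c : ℂ) (x : BraidedMatrices R), st (c • x) = (starRingEnd ℂ) c • st x) ∧
      -- antimultiplicative
      (∀ x y : BraidedMatrices R, st (x * y) = st y * st x) ∧
      -- involution
      (∀ x : BraidedMatrices R, st (st x) = x) ∧
      -- extending the hermitian involution on the generators
      (∀ i j : Fin n, st (ugen R i j) = ugen R j i) ∧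
      -- `Δ̲((u^i_j)^{*̲}) = τ((*̲ ⊗ *̲)(Δ̲ u^i_j))` on the generators
      (∀ i j : Fin n,
          (∑ k : Fin n, ugen R j k ⊗ₜ[ℂ] ugen R k i)
            = ∑ k : Fin n, st (ugen R k j) ⊗ₜ[ℂ] st (ugen R i k)) := by
    classical
  set F := BMStar.Fhom R hreal with hF
  refine ⟨AddMonoidHom.mk' (fun x => BMStar.ofOp R (F x)) (fun x y => by simp [map_add]; rfl),
    ?_, ?_, ?_, ?_, ?_⟩
  · -- antilinear
    intro c x
    obtain ⟨a, rfl⟩ := RingQuot.mkAlgHom_surjective ℂ (braidedMatrixRel R) x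
    simp only [AddMonoidHom.mk'_apply]
    have hsm : (c • RingQuot.mkAlgHom ℂ (braidedMatrixRel R) a : BraidedMatrices R)
        = RingQuot.mkAlgHom ℂ (braidedMatrixRel R) (c • a) :=
      (map_smul (RingQuot.mkAlgHom ℂ (braidedMatrixRel R)) c a).symm
    erw [hsm]
    rw [BMStar.Fhom_mk, BMStar.Fhom_mk, map_smul]
    have := BMStar.smul_toOp R c (BMStar.ofOp R (BMStar.phi R a))
    rw [BMStar.toOp_ofOp] at this
    rw [this]
    rfl
  · -- antimultiplicative
    intro x y
    simp only [AddMonoidHom.mk'_apply, map_mul]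
    rfl
  · -- involution
    intro x
    obtain ⟨a, rfl⟩ := RingQuot.mkAlgHom_surjective ℂ (braidedMatrixRel R) x
    simp only [AddMonoidHom.mk'_apply]
    induction a using FreeAlgebra.induction with
    | grade0 c =>
        have hm : ∀ d : ℂ, BMStar.ofOp R (F (RingQuot.mkAlgHom ℂ (braidedMatrixRel R)
              (algebraMap ℂ (FreeAlgebra ℂ (Fin n × Fin n)) d)))
            = RingQuot.mkAlgHom ℂ (braidedMatrixRel R)
              (algebraMap ℂ (FreeAlgebra ℂ (Fin n × Fin n)) ((starRingEnd ℂ) d)) := by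
          intro d
          rw [BMStar.Fhom_mk, AlgHom.commutes, BMStar.algebraMap_conjB, BMStar.ofOp_toOp]
          exact (AlgHom.commutes (RingQuot.mkAlgHom ℂ (braidedMatrixRel R)) _).symm
        rw [hm, hm]
        simp
        rfl
    | grade1 p =>
        rw [BMStar.Fhom_mk, BMStar.phi_ι, BMStar.ofOp_toOp]
        show BMStar.ofOp R (F (RingQuot.mkAlgHom ℂ (braidedMatrixRel R)
          (FreeAlgebra.ι ℂ (p.2, p.1)))) = _
        rw [BMStar.Fhom_mk, BMStar.phi_ι, BMStar.ofOp_toOp]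
        simp [ugen]
        rfl
    | mul a b ha hb =>
        have hF3 : ∀ u v : BraidedMatrices R,
            BMStar.ofOp R (F (u * v)) = BMStar.ofOp R (F v) * BMStar.ofOp R (F u) := by
          intro u v; rw [map_mul]; rfl
        erw [show (RingQuot.mkAlgHom ℂ (braidedMatrixRel R)) (a * b)
              = (RingQuot.mkAlgHom ℂ (braidedMatrixRel R)) a
                * (RingQuot.mkAlgHom ℂ (braidedMatrixRel R)) b from map_mul _ _ _,
          hF3, hF3, ha, hb]
        rfl
    | add a b ha hb =>
        have hF2 : ∀ u v : BraidedMatrices R,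
            BMStar.ofOp R (F (u + v)) = BMStar.ofOp R (F u) + BMStar.ofOp R (F v) := by
          intro u v; rw [map_add]; rfl
        erw [show (RingQuot.mkAlgHom ℂ (braidedMatrixRel R)) (a + b)
              = (RingQuot.mkAlgHom ℂ (braidedMatrixRel R)) a
                + (RingQuot.mkAlgHom ℂ (braidedMatrixRel R)) b from map_add _ _ _,
          hF2, hF2, ha, hb]
        rfl
  · -- generators
    intro i j
    simp only [AddMonoidHom.mk'_apply]
    rw [ugen, BMStar.Fhom_mk, BMStar.phi_ι, BMStar.ofOp_toOp]
  · -- coproduct compatibility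
    intro i j
    refine Finset.sum_congr rfl fun k _ => ?_
    have hg : ∀ a b : Fin n,
        BMStar.ofOp R (F (ugen R a b)) = ugen R b a := by
      intro a b
      rw [ugen, BMStar.Fhom_mk, BMStar.phi_ι, BMStar.ofOp_toOp]
    simp only [AddMonoidHom.mk'_apply, hg]
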